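/- Reduction of the SDP for knockoff construction: let Σ ∈ ℝ^{p×p} be symmetric positive semidefinite. If s ∈ ℝ^p is feasible for the problem minimize Σ_j |1 − s_j| subject to s_j ≥ 0 and diag{s} ⪯ 2Σ, then the truncated vector s′ with s′_j = min(s_j, 1) is also feasible and satisfies Σ_j |1 − s′_j| ≤ Σ_j |1 − s_j|; consequently there is an optimal solution with s_j ≤ 1 for all j, and the problem has the same optimal value as the SDP: minimize Σ_j (1 − s_j) subject to 0 ≤ s_j ≤ 1 and diag{s} ⪯ 2Σ. -/

import Mathlib

open Matrix

/-- Feasibility for the knockoff SDP: `s_j ≥ 0` for all `j` and `diag{s} ⪯ 2Σ`. -/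
def KnockoffSDPFeasible {p : ℕ} (Sgm : Matrix (Fin p) (Fin p) ℝ) (s : Fin p → ℝ) : Prop :=
  (∀ j, 0 ≤ s j) ∧ ((2 : ℝ) • Sgm - Matrix.diagonal s).PosSemidef

lemma psd_diag_nonneg {p : ℕ} {M : Matrix (Fin p) (Fin p) ℝ} (h : M.PosSemidef) (j : Fin p) :
    0 ≤ M j j := by
  have := h.dotProduct_mulVec_nonneg (Pi.single j 1)
  simpa [Matrix.mulVec_single, single_dotProduct] using this

lemma trunc_feasible {p : ℕ} {Sgm : Matrix (Fin p) (Fin p) ℝ} {s : Fin p → ℝ}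
    (hs : KnockoffSDPFeasible Sgm s) :
    KnockoffSDPFeasible Sgm (fun j => min (s j) 1) := by
  refine ⟨fun j => le_min (hs.1 j) zero_le_one, ?_⟩
  have key : (2 : ℝ) • Sgm - Matrix.diagonal (fun j => min (s j) 1)
      = ((2 : ℝ) • Sgm - Matrix.diagonal s)
        + Matrix.diagonal (fun j => s j - min (s j) 1) := by
    have : Matrix.diagonal (fun j => s j - min (s j) 1)
        = Matrix.diagonal s - Matrix.diagonal (fun j => min (s j) 1) :=
      (Matrix.diagonal_sub s (fun j => min (s j) 1)).symm
    rw [this]; abel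
  rw [key]
  exact hs.2.add (Matrix.PosSemidef.diagonal (fun j => sub_nonneg.2 (min_le_left _ _)))

lemma trunc_sum_le {p : ℕ} (s : Fin p → ℝ) :
    (∑ j, |1 - min (s j) 1|) ≤ ∑ j, |1 - s j| := by
  refine Finset.sum_le_sum fun j _ => ?_
  rcases le_total (s j) 1 with h | h
  · rw [min_eq_left h]
  · rw [min_eq_right h]
    simp only [sub_self, abs_zero]
    exact abs_nonneg _

lemma trunc_abs_eq {p : ℕ} (s : Fin p → ℝ) :
    (∑ j, |1 - min (s j) 1|) = ∑ j, (1 - min (s j) 1) := by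
  refine Finset.sum_congr rfl fun j _ => ?_
  exact abs_of_nonneg (by simp [min_le_right (s j) 1])

lemma feas_compact {p : ℕ} (Sgm : Matrix (Fin p) (Fin p) ℝ) (hSgm : Sgm.PosSemidef) :
    IsCompact {t : Fin p → ℝ | KnockoffSDPFeasible Sgm t} := by
  set S := {t : Fin p → ℝ | KnockoffSDPFeasible Sgm t}
  have hherm : ∀ t : Fin p → ℝ, ((2 : ℝ) • Sgm - Matrix.diagonal t).IsHermitian := by
    intro t
    show _ᴴ = _
    rw [Matrix.conjTranspose_sub, Matrix.conjTranspose_smul, hSgm.1,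
      Matrix.isHermitian_diagonal t]
    simp
  have hclosed : IsClosed S := by
    have : S = (⋂ j, {t : Fin p → ℝ | 0 ≤ t j}) ∩
        ⋂ x : Fin p → ℝ, {t : Fin p → ℝ |
          0 ≤ star x ⬝ᵥ (((2 : ℝ) • Sgm - Matrix.diagonal t) *ᵥ x)} := by
      ext t
      constructor
      · rintro ⟨h1, _, h2⟩
        exact ⟨Set.mem_iInter.2 h1, Set.mem_iInter.2 (Matrix.PosSemidef.dotProduct_mulVec_nonneg ⟨hherm t, h2⟩)⟩
      · rintro ⟨h1, h2⟩
        exact ⟨Set.mem_iInter.1 h1, Matrix.PosSemidef.of_dotProduct_mulVec_nonneg (hherm t) (Set.mem_iInter.1 h2)⟩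
    rw [this]
    refine IsClosed.inter (isClosed_iInter fun j => isClosed_le continuous_const
      (continuous_apply j)) (isClosed_iInter fun x => isClosed_le continuous_const ?_)
    have hc : Continuous fun t : Fin p → ℝ =>
        ∑ i, x i * ∑ j, ((2 : ℝ) * Sgm i j - (if i = j then t i else 0)) * x j := by
      refine continuous_finset_sum _ fun i _ => Continuous.mul continuous_const
        (continuous_finset_sum _ fun j _ => Continuous.mul
          (Continuous.sub continuous_const ?_) continuous_const)
      by_cases h : i = j
      · simpa [h] using continuous_apply j
      · simp only [if_neg h]; exact continuous_const
    have heq : (fun t : Fin p → ℝ =>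
        star x ⬝ᵥ (((2 : ℝ) • Sgm - Matrix.diagonal t) *ᵥ x))
        = fun t => ∑ i, x i * ∑ j, ((2 : ℝ) * Sgm i j - (if i = j then t i else 0)) * x j := by
      funext t
      simp [dotProduct, Matrix.mulVec, Matrix.sub_apply, Matrix.smul_apply,
        Matrix.diagonal_apply, smul_eq_mul]
    rw [heq]; exact hc
  have hsub : S ⊆ Set.Icc (fun _ => (0 : ℝ)) (fun j => 2 * Sgm j j) := by
    intro t ht
    refine ⟨fun j => ht.1 j, fun j => ?_⟩
    show t j ≤ 2 * Sgm j j
    have h0 : 0 ≤ ((2 : ℝ) • Sgm - Matrix.diagonal t) j j := psd_diag_nonneg ht.2 j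
    simp only [Matrix.sub_apply, Matrix.smul_apply, Matrix.diagonal_apply_eq,
      smul_eq_mul] at h0
    linarith
  exact (isCompact_Icc).of_isClosed_subset hclosed hsub

/-- **Reduction of the SDP for knockoff construction**: let `Σ` be symmetric positive
semidefinite.  If `s` is feasible for "minimize `∑_j |1 − s_j|` subject to `s_j ≥ 0`,
`diag{s} ⪯ 2Σ`", then the truncation `s′_j = min(s_j, 1)` is feasible with
`∑_j |1 − s′_j| ≤ ∑_j |1 − s_j|`; consequently there is an optimal solution with
`s_j ≤ 1` for all `j`, and the problem has the same optimal value as the SDP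
"minimize `∑_j (1 − s_j)` subject to `0 ≤ s_j ≤ 1`, `diag{s} ⪯ 2Σ`". -/
theorem knockoff_sdp_reduction {p : ℕ}
    (Sgm : Matrix (Fin p) (Fin p) ℝ) (hSgm : Sgm.PosSemidef)
    (s : Fin p → ℝ) (hs : KnockoffSDPFeasible Sgm s)
    (s' : Fin p → ℝ) (hs' : s' = fun j => min (s j) 1) :
    KnockoffSDPFeasible Sgm s' ∧
    (∑ j, |1 - s' j|) ≤ ∑ j, |1 - s j| ∧
    (∃ sOpt : Fin p → ℝ, KnockoffSDPFeasible Sgm sOpt ∧ (∀ j, sOpt j ≤ 1) ∧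
      ∀ t : Fin p → ℝ, KnockoffSDPFeasible Sgm t →
        (∑ j, |1 - sOpt j|) ≤ ∑ j, |1 - t j|) ∧
    sInf {v : ℝ | ∃ t : Fin p → ℝ, KnockoffSDPFeasible Sgm t ∧ v = ∑ j, |1 - t j|}
      = sInf {v : ℝ | ∃ t : Fin p → ℝ,
          ((∀ j, 0 ≤ t j ∧ t j ≤ 1) ∧ ((2 : ℝ) • Sgm - Matrix.diagonal t).PosSemidef) ∧
          v = ∑ j, (1 - t j)} := by
  subst hs'
  have hcontf : Continuous fun t : Fin p → ℝ => ∑ j, |1 - t j| :=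
    continuous_finset_sum _ fun j _ => (continuous_const.sub (continuous_apply j)).abs
  obtain ⟨m, hmS, hmin⟩ := (feas_compact Sgm hSgm).exists_isMinOn ⟨s, hs⟩ hcontf.continuousOn
  refine ⟨trunc_feasible hs, trunc_sum_le s, ?_, ?_⟩
  · refine ⟨fun j => min (m j) 1, trunc_feasible hmS, fun j => min_le_right _ _,
      fun t ht => ?_⟩
    exact le_trans (trunc_sum_le m) (hmin ht)
  · set A := {v : ℝ | ∃ t : Fin p → ℝ, KnockoffSDPFeasible Sgm t ∧ v = ∑ j, |1 - t j|}
    set B := {v : ℝ | ∃ t : Fin p → ℝ,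
        ((∀ j, 0 ≤ t j ∧ t j ≤ 1) ∧ ((2 : ℝ) • Sgm - Matrix.diagonal t).PosSemidef) ∧
        v = ∑ j, (1 - t j)}
    have hAne : A.Nonempty := ⟨_, s, hs, rfl⟩
    have hBne : B.Nonempty := by
      refine ⟨_, fun j => min (s j) 1,
        ⟨fun j => ⟨le_min (hs.1 j) zero_le_one, min_le_right _ _⟩, (trunc_feasible hs).2⟩, rfl⟩
    have hAbdd : BddBelow A := by
      refine ⟨0, fun v hv => ?_⟩
      obtain ⟨t, _, rfl⟩ := hv
      exact Finset.sum_nonneg fun j _ => abs_nonneg _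
    have hBbdd : BddBelow B := by
      refine ⟨0, fun v hv => ?_⟩
      obtain ⟨t, ⟨ht1, _⟩, rfl⟩ := hv
      exact Finset.sum_nonneg fun j _ => by linarith [(ht1 j).2]
    have hBA : B ⊆ A := by
      rintro v ⟨t, ⟨ht1, ht2⟩, rfl⟩
      refine ⟨t, ⟨fun j => (ht1 j).1, ht2⟩, ?_⟩
      exact (Finset.sum_congr rfl fun j _ => (abs_of_nonneg (by linarith [(ht1 j).2])).symm)
    refine le_antisymm (csInf_le_csInf hAbdd hBne hBA) (le_csInf hAne ?_)
    rintro v ⟨t, ht, rfl⟩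
    have hwB : (∑ j, (1 - min (t j) 1)) ∈ B :=
      ⟨fun j => min (t j) 1,
        ⟨fun j => ⟨le_min (ht.1 j) zero_le_one, min_le_right _ _⟩, (trunc_feasible ht).2⟩, rfl⟩
    calc sInf B ≤ ∑ j, (1 - min (t j) 1) := csInf_le hBbdd hwB
      _ = ∑ j, |1 - min (t j) 1| := (trunc_abs_eq t).symm
      _ ≤ ∑ j, |1 - t j| := trunc_sum_le t
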